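/- Let Ω₁ ⊂ ℝ be a bounded open set, Ω₂ ⊂ ℝ a bounded open set, and Ω = Ω₁ × Ω₂ ⊂ ℝ². If the Dirichlet eigenvalues of Ω₁ satisfy Pólya's conjecture N_{Ω₁}^D(λ) ≤ (|Ω₁|/π)√λ (automatic in 1D), then for all λ > 0 the counting function of Ω satisfies N_Ω^D(λ) ≤ (|Ω₁||Ω₂|/(4π)) λ (1 − 2/(3|Ω₂|√λ))_+. -/

import Mathlib

open Real


-- exact quarter circle integral
lemma quarter_circle (T : ℝ) (hT : 0 < T) :
    ∫ x in (0:ℝ)..T, Real.sqrt (T^2 - x^2) = π * T^2 / 4 := by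
  have h1 : ∫ x in (0:ℝ)..1, Real.sqrt (1 - x^2) = π / 4 := by
    have heven : ∫ x in (-1:ℝ)..0, Real.sqrt (1 - x^2)
        = ∫ x in (0:ℝ)..1, Real.sqrt (1 - x^2) := by
      have := intervalIntegral.integral_comp_neg (a := (0:ℝ)) (b := 1)
        (fun x => Real.sqrt (1 - x^2))
      simp only [neg_neg, neg_zero] at this
      rw [← this]
      apply intervalIntegral.integral_congr
      intro x hx
      simp [neg_sq]
    have hsplit : ∫ x in (-1:ℝ)..1, Real.sqrt (1 - x^2)
        = (∫ x in (-1:ℝ)..0, Real.sqrt (1 - x^2)) + ∫ x in (0:ℝ)..1, Real.sqrt (1 - x^2) := by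
      rw [intervalIntegral.integral_add_adjacent_intervals] <;>
      · apply Continuous.intervalIntegrable; continuity
    have := integral_sqrt_one_sub_sq
    rw [hsplit, heven] at this
    linarith
  have hsub : ∫ y in (0:ℝ)..1, Real.sqrt (T^2 - (T*y)^2)
      = T⁻¹ • ∫ x in (0:ℝ)..T, Real.sqrt (T^2 - x^2) := by
    have := intervalIntegral.integral_comp_mul_left
      (a := (0:ℝ)) (b := 1) (fun x => Real.sqrt (T^2 - x^2)) (c := T) hT.ne'
    simpa using this
  have hval : ∀ y : ℝ, Real.sqrt (T^2 - (T*y)^2) = T * Real.sqrt (1 - y^2) := by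
    intro y
    have : T^2 - (T*y)^2 = T^2 * (1 - y^2) := by ring
    rw [this, Real.sqrt_mul (sq_nonneg T), Real.sqrt_sq hT.le]
  have h2 : ∫ y in (0:ℝ)..1, Real.sqrt (T^2 - (T*y)^2) = T * (π/4) := by
    simp_rw [hval]
    rw [intervalIntegral.integral_const_mul, h1]
  rw [h2] at hsub
  rw [smul_eq_mul] at hsub
  field_simp at hsub
  linarith [hsub]


lemma sqrt_saving (T A B : ℝ) (hT : 0 < T) (hB : 0 ≤ B) (hBA : B ≤ A) (hA : A ≤ T^2) :
    Real.sqrt B + (A - B) / (2*T) ≤ Real.sqrt A := by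
  have hA0 : 0 ≤ A := hB.trans hBA
  have ha := Real.sq_sqrt hA0
  have hb := Real.sq_sqrt hB
  have hab : Real.sqrt B ≤ Real.sqrt A := Real.sqrt_le_sqrt hBA
  have haT : Real.sqrt A ≤ T := by
    rw [show T = Real.sqrt (T^2) from (Real.sqrt_sq hT.le).symm]
    exact Real.sqrt_le_sqrt hA
  have hbT : Real.sqrt B ≤ T := hab.trans haT
  have key : A - B ≤ (Real.sqrt A - Real.sqrt B) * (2*T) := by
    nlinarith [Real.sqrt_nonneg A, Real.sqrt_nonneg B]
  have h2T : (0:ℝ) < 2*T := by linarith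
  have h3 : (A - B)/(2*T) ≤ Real.sqrt A - Real.sqrt B := by
    rw [div_le_iff₀ h2T]; linarith [key]
  linarith

lemma chord (T M x : ℝ) (hM0 : 0 ≤ M) (hMT : M < T) (hx1 : M ≤ x) (hx2 : x ≤ T) :
    Real.sqrt (T^2 - M^2) * (T - x) / (T - M) ≤ Real.sqrt (T^2 - x^2) := by
  have hTM : 0 < T - M := by linarith
  have hB : 0 ≤ T^2 - M^2 := by nlinarith
  have hL : 0 ≤ Real.sqrt (T^2 - M^2) * (T - x) / (T - M) :=
    div_nonneg (mul_nonneg (Real.sqrt_nonneg _) (by linarith)) hTM.le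
  rw [show Real.sqrt (T^2 - x^2) = Real.sqrt (T^2 - x^2) from rfl]
  rw [← Real.sqrt_sq hL]
  apply Real.sqrt_le_sqrt
  rw [div_pow, mul_pow, Real.sq_sqrt hB]
  rw [div_le_iff₀ (by positivity)]
  nlinarith [mul_nonneg (mul_nonneg (mul_nonneg hTM.le (sub_nonneg.2 hx2)) (by linarith : (0:ℝ) ≤ T)) (sub_nonneg.2 hx1)]

open Real

lemma gauss_23 (M : ℕ) : ∑ k ∈ Finset.range M, ((k:ℝ) + 2/3)
    = (M:ℝ)*((M:ℝ)-1)/2 + 2*(M:ℝ)/3 := by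
  induction M with
  | zero => simp
  | succ n ih => rw [Finset.sum_range_succ, ih]; push_cast; ring

lemma polyP (u v : ℝ) (hu : 1 ≤ u) (hv : v ≤ 1) (hv0 : 0 < v) :
    0 ≤ u^4 + 6*u^3*v^3 - 6*u^2*v^2 + 3*v^4 + u^2 - v^2 := by
  have base : (0:ℝ) ≤ 3*v^4 + 6*v^3 - 7*v^2 + 2 := by
    nlinarith [sq_nonneg (v - 1/2), sq_nonneg (v-1), sq_nonneg (v*v - 1/2), sq_nonneg v, mul_pos hv0 hv0]
  have h1 : 0 ≤ (u-1)^2*(2*u+1) := by nlinarith [sq_nonneg (u-1)]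
  have h3 : (u^2-1) * (u^2 + 2 - 6*v^2 + 9*v^3) ≥ 0 := by
    apply mul_nonneg (by nlinarith)
    nlinarith [sq_nonneg (3*v - 2), mul_pos hv0 hv0, sq_nonneg v,
      mul_nonneg (mul_nonneg hv0.le hv0.le) hv0.le]
  nlinarith [mul_nonneg (mul_nonneg (mul_nonneg h1 hv0.le) hv0.le) hv0.le]

set_option maxHeartbeats 1000000 in
lemma riesz_sum (T : ℝ) (hT2 : 2 ≤ 3 * π * T) (N : ℕ) :
    ∑ k ∈ Finset.range N, Real.sqrt (T^2 - ((k:ℝ)+1)^2) ≤ π * T^2 / 4 - T / 6 := by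
  have hπ := Real.pi_pos
  have hT0 : 0 < T := by nlinarith
  set M : ℕ := ⌈T⌉₊ - 1 with hMdef
  have hceil1 : 1 ≤ ⌈T⌉₊ := Nat.one_le_ceil_iff.mpr hT0
  have hMcast : (M:ℝ) = (⌈T⌉₊:ℝ) - 1 := by
    rw [hMdef, Nat.cast_sub hceil1]; norm_num
  have hMT : (M:ℝ) < T := by
    rw [hMcast]; have := Nat.ceil_lt_add_one hT0.le; linarith
  have hTM1 : T ≤ (M:ℝ) + 1 := by
    rw [hMcast]; have := Nat.le_ceil T; linarith
  have hzero : ∀ k : ℕ, M ≤ k → Real.sqrt (T^2 - ((k:ℝ)+1)^2) = 0 := by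
    intro k hk
    apply Real.sqrt_eq_zero'.mpr
    have h1 : (M:ℝ) ≤ (k:ℝ) := by exact_mod_cast hk
    nlinarith
  have hreduce : ∑ k ∈ Finset.range N, Real.sqrt (T^2 - ((k:ℝ)+1)^2)
      ≤ ∑ k ∈ Finset.range M, Real.sqrt (T^2 - ((k:ℝ)+1)^2) := by
    calc ∑ k ∈ Finset.range N, Real.sqrt (T^2 - ((k:ℝ)+1)^2)
        ≤ ∑ k ∈ Finset.range (max N M), Real.sqrt (T^2 - ((k:ℝ)+1)^2) :=
          Finset.sum_le_sum_of_subset_of_nonneg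
            (Finset.range_subset_range.2 (le_max_left _ _))
            (fun i _ _ => Real.sqrt_nonneg _)
      _ = ∑ k ∈ Finset.range M, Real.sqrt (T^2 - ((k:ℝ)+1)^2) := by
          refine (Finset.sum_subset (Finset.range_subset_range.2 (le_max_right _ _)) ?_).symm
          intro x _ hx
          exact hzero x (le_of_not_gt (fun h => hx (Finset.mem_range.2 h)))
  refine hreduce.trans ?_
  rcases Nat.eq_zero_or_pos M with hM0 | hM1
  · rw [hM0]; simp; nlinarith
  -- main case
  have hM1R : (1:ℝ) ≤ (M:ℝ) := by exact_mod_cast hM1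
  have hT1 : 1 < T := lt_of_le_of_lt hM1R hMT
  have hfc : Continuous (fun x : ℝ => Real.sqrt (T^2 - x^2)) :=
    Real.continuous_sqrt.comp (continuous_const.sub (continuous_pow 2))
  have hint : ∀ a b : ℝ,
      IntervalIntegrable (fun x : ℝ => Real.sqrt (T^2 - x^2)) MeasureTheory.volume a b :=
    fun a b => hfc.intervalIntegrable a b
  -- Step A
  have stepA : ∀ k ∈ Finset.range M,
      Real.sqrt (T^2 - ((k:ℝ)+1)^2) + ((k:ℝ) + 2/3)/(2*T)
        ≤ ∫ x in (k:ℝ)..((k:ℝ)+1), Real.sqrt (T^2 - x^2) := by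
    intro k hk
    have hkM : (k:ℝ) + 1 ≤ (M:ℝ) := by
      have := Finset.mem_range.1 hk
      exact_mod_cast Nat.succ_le_of_lt this
    have hk0 : (0:ℝ) ≤ (k:ℝ) := Nat.cast_nonneg k
    have hlow : ∀ x ∈ Set.Icc (k:ℝ) ((k:ℝ)+1),
        Real.sqrt (T^2 - ((k:ℝ)+1)^2) + (((k:ℝ)+1)^2 - x^2)/(2*T)
          ≤ Real.sqrt (T^2 - x^2) := by
      intro x hx
      obtain ⟨hx1, hx2⟩ := hx
      have h := sqrt_saving T (T^2 - x^2) (T^2 - ((k:ℝ)+1)^2) hT0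
        (by nlinarith) (by nlinarith) (by nlinarith)
      have he : T^2 - x^2 - (T^2 - ((k:ℝ)+1)^2) = ((k:ℝ)+1)^2 - x^2 := by ring
      rw [he] at h
      exact h
    have hlowc : Continuous (fun x : ℝ =>
        Real.sqrt (T^2 - ((k:ℝ)+1)^2) + (((k:ℝ)+1)^2 - x^2)/(2*T)) :=
      continuous_const.add ((continuous_const.sub (continuous_pow 2)).div_const _)
    have hmono := intervalIntegral.integral_mono_on (by linarith : (k:ℝ) ≤ (k:ℝ)+1)
      (hlowc.intervalIntegrable _ _) (hint _ _) hlow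
    have hcalc : (∫ x in (k:ℝ)..((k:ℝ)+1),
        (Real.sqrt (T^2 - ((k:ℝ)+1)^2) + (((k:ℝ)+1)^2 - x^2)/(2*T)))
        = Real.sqrt (T^2 - ((k:ℝ)+1)^2) + ((k:ℝ) + 2/3)/(2*T) := by
      have hrw : (fun x : ℝ => Real.sqrt (T^2 - ((k:ℝ)+1)^2) + (((k:ℝ)+1)^2 - x^2)/(2*T))
          = fun x : ℝ => (Real.sqrt (T^2 - ((k:ℝ)+1)^2) + ((k:ℝ)+1)^2/(2*T))
              + (-(1/(2*T))) * x^2 := by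
        funext x
        have h2T : (2*T) ≠ 0 := by positivity
        field_simp
        ring
      rw [hrw, intervalIntegral.integral_add (g := fun x : ℝ => (-(1/(2*T))) * x^2) intervalIntegrable_const
        (((continuous_const.mul (continuous_pow 2))).intervalIntegrable _ _),
        intervalIntegral.integral_const, intervalIntegral.integral_const_mul, integral_pow, smul_eq_mul]
      have h2T : (2*T) ≠ 0 := by positivity
      field_simp
      ring
    rw [hcalc] at hmono
    exact hmono
  -- Step B
  have stepB : ∑ k ∈ Finset.range M, ∫ x in (k:ℝ)..((k:ℝ)+1), Real.sqrt (T^2 - x^2)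
      = ∫ x in (0:ℝ)..(M:ℝ), Real.sqrt (T^2 - x^2) := by
    have h := intervalIntegral.sum_integral_adjacent_intervals
      (a := fun k : ℕ => (k:ℝ)) (f := fun x : ℝ => Real.sqrt (T^2 - x^2))
      (μ := MeasureTheory.volume) (n := M) (fun k _ => hint _ _)
    simp only [Nat.cast_zero, Nat.cast_add, Nat.cast_one] at h
    exact h
  -- Step C
  have stepC : (∫ x in (0:ℝ)..(M:ℝ), Real.sqrt (T^2 - x^2))
      + (∫ x in (M:ℝ)..T, Real.sqrt (T^2 - x^2)) = π * T^2/4 := by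
    rw [intervalIntegral.integral_add_adjacent_intervals (hint _ _) (hint _ _)]
    exact quarter_circle T hT0
  -- Step D : tail bound
  have hu2 : Real.sqrt T ^2 = T := Real.sq_sqrt hT0.le
  have hv2 : Real.sqrt (T - (M:ℝ)) ^2 = T - (M:ℝ) := Real.sq_sqrt (by linarith)
  set u := Real.sqrt T with hu
  set v := Real.sqrt (T - (M:ℝ)) with hv
  have hu1 : 1 ≤ u := by nlinarith [Real.sqrt_nonneg T]
  have hv1 : v ≤ 1 := by nlinarith [Real.sqrt_nonneg (T - (M:ℝ))]
  have hv0 : 0 < v := Real.sqrt_pos.mpr (by linarith)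
  have stepD : u * v^3 / 2 ≤ ∫ x in (M:ℝ)..T, Real.sqrt (T^2 - x^2) := by
    have hM0 : (0:ℝ) ≤ (M:ℝ) := Nat.cast_nonneg M
    have hlow : ∀ x ∈ Set.Icc (M:ℝ) T,
        Real.sqrt (T^2 - (M:ℝ)^2) * (T - x) / (T - (M:ℝ)) ≤ Real.sqrt (T^2 - x^2) :=
      fun x hx => chord T (M:ℝ) x hM0 hMT hx.1 hx.2
    have hlowc : Continuous (fun x : ℝ =>
        Real.sqrt (T^2 - (M:ℝ)^2) * (T - x) / (T - (M:ℝ))) :=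
      ((continuous_const.mul (continuous_const.sub continuous_id')).div_const _)
    have hmono := intervalIntegral.integral_mono_on hMT.le
      (hlowc.intervalIntegrable _ _) (hint _ _) hlow
    have hcalc : (∫ x in (M:ℝ)..T, Real.sqrt (T^2 - (M:ℝ)^2) * (T - x) / (T - (M:ℝ)))
        = Real.sqrt (T^2 - (M:ℝ)^2) * (T - (M:ℝ)) / 2 := by
      have hTM : T - (M:ℝ) ≠ 0 := by linarith
      have hrw : (fun x : ℝ => Real.sqrt (T^2 - (M:ℝ)^2) * (T - x) / (T - (M:ℝ)))
          = fun x : ℝ => (Real.sqrt (T^2 - (M:ℝ)^2) * T / (T - (M:ℝ)))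
              + (-(Real.sqrt (T^2 - (M:ℝ)^2) / (T - (M:ℝ)))) * x := by
        funext x; field_simp; ring
      rw [hrw, intervalIntegral.integral_add (g := fun x : ℝ => (-(Real.sqrt (T^2 - (M:ℝ)^2) / (T - (M:ℝ)))) * x) intervalIntegrable_const
        ((continuous_const.mul continuous_id').intervalIntegrable _ _),
        intervalIntegral.integral_const, intervalIntegral.integral_const_mul, integral_id, smul_eq_mul]
      field_simp
      ring
    rw [hcalc] at hmono
    refine le_trans ?_ hmono
    have hfact : v * u ≤ Real.sqrt (T^2 - (M:ℝ)^2) := by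
      rw [hv, hu, ← Real.sqrt_mul (by linarith) T]
      apply Real.sqrt_le_sqrt
      nlinarith [mul_nonneg (sub_nonneg.2 hMT.le) hM0]
    have : u * v^3 / 2 = (v * u) * (T - (M:ℝ)) / 2 := by
      rw [← hv2]; ring
    rw [this]
    have h := mul_le_mul_of_nonneg_right hfact (by linarith : (0:ℝ) ≤ T - (M:ℝ))
    linarith
  -- Step E
  have hsumA : ∑ k ∈ Finset.range M, Real.sqrt (T^2 - ((k:ℝ)+1)^2)
      + (∑ k ∈ Finset.range M, ((k:ℝ) + 2/3))/(2*T)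
      ≤ ∫ x in (0:ℝ)..(M:ℝ), Real.sqrt (T^2 - x^2) := by
    rw [← stepB, Finset.sum_div, ← Finset.sum_add_distrib]
    exact Finset.sum_le_sum stepA
  rw [gauss_23] at hsumA
  have hmuv : (M:ℝ) = u^2 - v^2 := by rw [hu2, hv2]; ring
  have key : T/6 ≤ u*v^3/2 + ((M:ℝ)*((M:ℝ)-1)/2 + 2*(M:ℝ)/3)/(2*T) := by
    have hnum : 0 ≤ u^4 + 6*u^3*v^3 - 6*u^2*v^2 + 3*v^4 + u^2 - v^2 := polyP u v hu1 hv1 hv0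
    have heq : u*v^3/2 + ((M:ℝ)*((M:ℝ)-1)/2 + 2*(M:ℝ)/3)/(2*T) - T/6
        = (6*T*u*v^3 + 3*(M:ℝ)^2 + (M:ℝ) - 2*T^2)/(12*T) := by
      field_simp
      ring
    have hnum2 : 0 ≤ 6*T*u*v^3 + 3*(M:ℝ)^2 + (M:ℝ) - 2*T^2 := by
      have h : 6*T*u*v^3 + 3*(M:ℝ)^2 + (M:ℝ) - 2*T^2
          = u^4 + 6*u^3*v^3 - 6*u^2*v^2 + 3*v^4 + u^2 - v^2 := by
        rw [hmuv, ← hu2]; ring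
      linarith [h ▸ hnum]
    have hpos : 0 ≤ (6*T*u*v^3 + 3*(M:ℝ)^2 + (M:ℝ) - 2*T^2)/(12*T) :=
      div_nonneg hnum2 (by linarith)
    linarith [heq, hpos]
  linarith [hsumA, stepC, stepD, key]


lemma sq_lt_of' (a b : ℝ) (ha : 0 ≤ a) (hb : 0 ≤ b) (h : a^2 < b^2) : a < b := by
  nlinarith

set_option maxHeartbeats 1000000 in
/-- Let `Ω₁, Ω₂ ⊂ ℝ` be bounded open sets of measures
`L₁, L₂ > 0`, with Dirichlet eigenvalues `lam1, lam2` (increasing, `lamᵢ k` the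
(k+1)-th eigenvalue) satisfying the 1D Pólya bound `λ_k ≥ π²k²/Lᵢ²`.  The
Dirichlet spectrum of `Ω = Ω₁ × Ω₂ ⊂ ℝ²` is the multiset of sums
`lam1 i + lam2 j`, and for all `Λ > 0`:
`N_Ω^D(Λ) ≤ (L₁L₂/(4π)) Λ (1 - 2/(3L₂√Λ))_+`. -/
theorem product_counting_dim_two
    (Ω₁ Ω₂ : Set ℝ) (h1o : IsOpen Ω₁) (h1b : Bornology.IsBounded Ω₁)
    (h2o : IsOpen Ω₂) (h2b : Bornology.IsBounded Ω₂)
    (L₁ L₂ : ℝ) (hL₁ : L₁ = (MeasureTheory.volume Ω₁).toReal)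
    (hL₂ : L₂ = (MeasureTheory.volume Ω₂).toReal)
    (hL₁pos : 0 < L₁) (hL₂pos : 0 < L₂)
    (lam1 lam2 : ℕ → ℝ) (hmono1 : Monotone lam1) (hmono2 : Monotone lam2)
    (hlam1 : ∀ k : ℕ, π ^ 2 * ((k : ℝ) + 1) ^ 2 / L₁ ^ 2 ≤ lam1 k)
    (hlam2 : ∀ k : ℕ, π ^ 2 * ((k : ℝ) + 1) ^ 2 / L₂ ^ 2 ≤ lam2 k)
    (Λ : ℝ) (hΛ : 0 < Λ) :
    (Nat.card {q : ℕ × ℕ // lam1 q.1 + lam2 q.2 < Λ} : ℝ) ≤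
      L₁ * L₂ / (4 * π) * Λ * max (1 - 2 / (3 * L₂ * Real.sqrt Λ)) 0 := by
  classical
  have hπ := Real.pi_pos
  have hsΛ : 0 < Real.sqrt Λ := Real.sqrt_pos.mpr hΛ
  have hsΛ2 : Real.sqrt Λ ^ 2 = Λ := Real.sq_sqrt hΛ.le
  have hlam1pos : ∀ k, 0 < lam1 k := fun k =>
    lt_of_lt_of_le (by positivity) (hlam1 k)
  have hlam2pos : ∀ k, 0 < lam2 k := fun k =>
    lt_of_lt_of_le (by positivity) (hlam2 k)
  rcases le_or_gt (1 - 2 / (3 * L₂ * Real.sqrt Λ)) 0 with hneg | hposc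
  · -- RHS is zero; show the set is empty
    rw [max_eq_right hneg, mul_zero]
    have hempty : IsEmpty {q : ℕ × ℕ // lam1 q.1 + lam2 q.2 < Λ} := by
      constructor
      rintro ⟨⟨i, j⟩, hq⟩
      have h1 : 3 * L₂ * Real.sqrt Λ ≤ 2 := by
        have h2 : 0 < 3 * L₂ * Real.sqrt Λ := by positivity
        rcases le_or_gt (3 * L₂ * Real.sqrt Λ) 2 with h | h
        · exact h
        · exfalso
          have : 2 / (3 * L₂ * Real.sqrt Λ) < 1 := (div_lt_one h2).mpr h
          linarith
      have hΛle : Λ ≤ 4 / (9 * L₂^2) := by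
        have : Real.sqrt Λ ≤ 2 / (3 * L₂) := by
          rw [le_div_iff₀ (by positivity)]; linarith
        calc Λ = Real.sqrt Λ ^ 2 := hsΛ2.symm
          _ ≤ (2 / (3 * L₂))^2 := by
              apply pow_le_pow_left₀ (Real.sqrt_nonneg _) this 2
          _ = 4 / (9 * L₂^2) := by ring
      have hl2 : π^2 * ((j:ℝ)+1)^2 / L₂^2 ≤ lam2 j := hlam2 j
      have hj1 : (1:ℝ) ≤ ((j:ℝ)+1)^2 := by
        have : (0:ℝ) ≤ (j:ℝ) := Nat.cast_nonneg j
        nlinarith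
      have hpi2 : (4:ℝ)/9 < π^2 := by nlinarith [Real.pi_gt_three]
      have : Λ < lam2 j := by
        calc Λ ≤ 4 / (9 * L₂^2) := hΛle
          _ < π^2 / L₂^2 := by
              rw [div_lt_div_iff₀ (by positivity) (by positivity)]
              nlinarith [hpi2, mul_pos hL₂pos hL₂pos]
          _ ≤ π^2 * ((j:ℝ)+1)^2 / L₂^2 := by
              rw [div_le_div_iff₀ (by positivity) (by positivity)]
              nlinarith [mul_nonneg (mul_nonneg (sq_nonneg π) (sq_nonneg L₂))
                (by linarith [hj1] : (0:ℝ) ≤ ((j:ℝ)+1)^2 - 1)]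
          _ ≤ lam2 j := hl2
      linarith [hlam1pos i, hq]
    rw [Nat.card_of_isEmpty]
    norm_num
  · rw [max_eq_left hposc.le]
    set s := Real.sqrt Λ with hs
    set T := L₂ * s / π with hTdef
    have hT2 : 2 ≤ 3 * π * T := by
      have h2 : 0 < 3 * L₂ * s := by positivity
      have : 2 / (3 * L₂ * s) < 1 := by linarith
      have h3 : 2 < 3 * L₂ * s := by
        rw [div_lt_one h2] at this; exact this
      have : 3 * π * T = 3 * L₂ * s := by
        rw [hTdef]; field_simp
      linarith [this]
    -- bounding box
    set K : ℕ := ⌈L₁ * s / π⌉₊ + ⌈L₂ * s / π⌉₊ + 1 with hK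
    set S : Finset (ℕ × ℕ) :=
      (Finset.range K ×ˢ Finset.range K).filter (fun q => lam1 q.1 + lam2 q.2 < Λ) with hS
    have hmem : ∀ q : ℕ × ℕ, (lam1 q.1 + lam2 q.2 < Λ) ↔ q ∈ S := by
      rintro ⟨i, j⟩
      simp only [hS, Finset.mem_filter, Finset.mem_product, Finset.mem_range]
      constructor
      · intro h
        refine ⟨⟨?_, ?_⟩, h⟩
        · have h1 : lam1 i < Λ := by linarith [hlam2pos j]
          have h2 : π^2 * ((i:ℝ)+1)^2 / L₁^2 < Λ := lt_of_le_of_lt (hlam1 i) h1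
          have h3 : ((i:ℝ)+1) * π / L₁ < s := by
            apply sq_lt_of' _ _ (by positivity) hsΛ.le
            rw [hsΛ2]
            calc (((i:ℝ)+1) * π / L₁)^2 = π^2 * ((i:ℝ)+1)^2 / L₁^2 := by ring
              _ < Λ := h2
          have h4 : ((i:ℝ)+1) < L₁ * s / π := by
            rw [div_lt_iff₀ hL₁pos, mul_comm] at h3
            rw [lt_div_iff₀ hπ]
            linarith
          have h5 : (i:ℝ) + 1 ≤ (⌈L₁ * s / π⌉₊ : ℝ) := le_trans h4.le (Nat.le_ceil _)
          have h6 : i + 1 ≤ ⌈L₁ * s / π⌉₊ := by exact_mod_cast h5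
          omega
        · have h1 : lam2 j < Λ := by linarith [hlam1pos i]
          have h2 : π^2 * ((j:ℝ)+1)^2 / L₂^2 < Λ := lt_of_le_of_lt (hlam2 j) h1
          have h3 : ((j:ℝ)+1) * π / L₂ < s := by
            apply sq_lt_of' _ _ (by positivity) hsΛ.le
            rw [hsΛ2]
            calc (((j:ℝ)+1) * π / L₂)^2 = π^2 * ((j:ℝ)+1)^2 / L₂^2 := by ring
              _ < Λ := h2
          have h4 : ((j:ℝ)+1) < L₂ * s / π := by
            rw [div_lt_iff₀ hL₂pos, mul_comm] at h3
            rw [lt_div_iff₀ hπ]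
            linarith
          have h5 : (j:ℝ) + 1 ≤ (⌈L₂ * s / π⌉₊ : ℝ) := le_trans h4.le (Nat.le_ceil _)
          have h6 : j + 1 ≤ ⌈L₂ * s / π⌉₊ := by exact_mod_cast h5
          omega
      · exact fun h => h.2
    have hcard : Nat.card {q : ℕ × ℕ // lam1 q.1 + lam2 q.2 < Λ} = S.card := by
      rw [← Nat.card_eq_finsetCard]
      exact Nat.card_congr (Equiv.subtypeEquivRight (fun q => hmem q))
    rw [hcard]
    -- split card as double sum
    have hsplit : S.card = ∑ j ∈ Finset.range K,
        ((Finset.range K).filter (fun i => lam1 i + lam2 j < Λ)).card := by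
      rw [hS, Finset.card_filter, Finset.sum_product_right]
      congr 1
      funext j
      rw [Finset.card_filter]
    rw [hsplit]
    -- inner bound
    have inner : ∀ j : ℕ,
        (((Finset.range K).filter (fun i => lam1 i + lam2 j < Λ)).card : ℝ)
          ≤ L₁ * Real.sqrt (Λ - lam2 j) / π := by
      intro j
      set R := L₁ * Real.sqrt (Λ - lam2 j) / π with hR
      have hRnn : 0 ≤ R := by positivity
      have hsub : (Finset.range K).filter (fun i => lam1 i + lam2 j < Λ)
          ⊆ Finset.range ⌊R⌋₊ := by
        intro i hi
        rw [Finset.mem_filter] at hi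
        have h1 : lam1 i < Λ - lam2 j := by linarith [hi.2]
        have h2 : π^2*((i:ℝ)+1)^2/L₁^2 < Λ - lam2 j := lt_of_le_of_lt (hlam1 i) h1
        have hpos' : 0 < Λ - lam2 j := lt_trans (by positivity) h2
        have h3 : ((i:ℝ)+1) * π / L₁ < Real.sqrt (Λ - lam2 j) := by
          apply sq_lt_of' _ _ (by positivity) (Real.sqrt_nonneg _)
          rw [Real.sq_sqrt hpos'.le]
          calc (((i:ℝ)+1) * π / L₁)^2 = π^2 * ((i:ℝ)+1)^2 / L₁^2 := by ring
            _ < Λ - lam2 j := h2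
        have h4 : ((i:ℝ)+1) ≤ R := by
          rw [hR, le_div_iff₀ hπ]
          rw [div_lt_iff₀ hL₁pos] at h3
          nlinarith [h3]
        have h6 : i + 1 ≤ ⌊R⌋₊ := Nat.le_floor (by exact_mod_cast h4)
        exact Finset.mem_range.2 (by omega)
      calc (((Finset.range K).filter (fun i => lam1 i + lam2 j < Λ)).card : ℝ)
          ≤ ((Finset.range ⌊R⌋₊).card : ℝ) := by
            exact_mod_cast Finset.card_le_card hsub
        _ = (⌊R⌋₊ : ℝ) := by rw [Finset.card_range]
        _ ≤ R := Nat.floor_le hRnn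
    have inner2 : ∀ j : ℕ,
        (((Finset.range K).filter (fun i => lam1 i + lam2 j < Λ)).card : ℝ)
          ≤ L₁ * Real.sqrt (Λ - π^2*((j:ℝ)+1)^2/L₂^2) / π := by
      intro j
      refine (inner j).trans ?_
      gcongr
      exact hlam2 j
    -- rewrite sqrt in terms of T
    have hrewrite : ∀ j : ℕ, Real.sqrt (Λ - π^2*((j:ℝ)+1)^2/L₂^2)
        = (π/L₂) * Real.sqrt (T^2 - ((j:ℝ)+1)^2) := by
      intro j
      have h1 : Λ - π^2*((j:ℝ)+1)^2/L₂^2 = (π/L₂)^2 * (T^2 - ((j:ℝ)+1)^2) := by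
        rw [← hsΛ2, hTdef]
        field_simp
      rw [h1, Real.sqrt_mul (sq_nonneg _), Real.sqrt_sq (by positivity)]
    have hfinal : ∑ j ∈ Finset.range K,
        (((Finset.range K).filter (fun i => lam1 i + lam2 j < Λ)).card : ℝ)
        ≤ (L₁/L₂) * (π * T^2/4 - T/6) := by
      calc ∑ j ∈ Finset.range K,
          (((Finset.range K).filter (fun i => lam1 i + lam2 j < Λ)).card : ℝ)
          ≤ ∑ j ∈ Finset.range K, L₁ * Real.sqrt (Λ - π^2*((j:ℝ)+1)^2/L₂^2) / π :=
            Finset.sum_le_sum (fun j _ => inner2 j)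
        _ = (L₁/L₂) * ∑ j ∈ Finset.range K, Real.sqrt (T^2 - ((j:ℝ)+1)^2) := by
            rw [Finset.mul_sum]
            apply Finset.sum_congr rfl
            intro j _
            rw [hrewrite j]
            field_simp
        _ ≤ (L₁/L₂) * (π*T^2/4 - T/6) :=
            mul_le_mul_of_nonneg_left (riesz_sum T hT2 K) (by positivity)
    have heq : (L₁/L₂) * (π * T^2/4 - T/6) = L₁ * L₂ / (4 * π) * Λ * (1 - 2 / (3 * L₂ * s)) := by
      rw [← hsΛ2, hTdef]
      field_simp
      ring
    rw [← heq]
    refine le_trans ?_ hfinal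
    push_cast
    exact le_refl _
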